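/- For every positive integer M there exists a solvable MPP instance such that every solution attaining the minimum makespan over all solutions has total arrival time at least M greater than the minimum total arrival time over all solutions; hence the gap between the two points of the Pareto front for the pair (total arrival time, makespan) can be made arbitrarily large. -/
import Mathlib


/-!
Formalization of multi-robot path planning on graphs (MPP).

An MPP instance consists of a connected simple graph `G` on a vertex type `V`,
a finite set of robots (an index type `R`), and injective start/goal
configurations `xI xG : R → V`.  A scheduled path is a map `ℕ → V`.
-/

namespace MPPFormal

variable {V R : Type}

/-- The arrival time of a path `p` with goal `g`: the smallest time `t`
with `p t = g`. -/
noncomputable def arrivalTime (g : V) (p : ℕ → V) : ℕ := sInf {t | p t = g}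

/-- A feasible scheduled path from `s` to `g` in the graph `G`:
it starts at `s`, reaches `g` at some time, stays at `g` forever after the
first time it reaches `g`, and at every time step it either traverses an
edge of `G` or stays put. -/
def FeasiblePath (G : SimpleGraph V) (s g : V) (p : ℕ → V) : Prop :=
  p 0 = s ∧ (∃ t, p t = g) ∧ (∀ t, arrivalTime g p ≤ t → p t = g) ∧
    ∀ t, G.Adj (p t) (p (t + 1)) ∨ p t = p (t + 1)

/-- Two scheduled paths collide if they meet at the same vertex at the same
time, or if they swap along an edge head-on. -/
def Collide (p q : ℕ → V) : Prop :=
  (∃ t, p t = q t) ∨ ∃ t, p t = q (t + 1) ∧ p (t + 1) = q t ∧ p t ≠ p (t + 1)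

/-- The length of a scheduled path: the number of time steps at which it
actually moves. -/
noncomputable def pathLen (p : ℕ → V) : ℕ := Set.ncard {t | p t ≠ p (t + 1)}

/-- A solution to the MPP instance `(G, R, xI, xG)`: a family of pairwise
non-colliding feasible paths, one per robot. -/
def IsSolution (G : SimpleGraph V) (xI xG : R → V) (p : R → ℕ → V) : Prop :=
  (∀ i, FeasiblePath G (xI i) (xG i) (p i)) ∧
    Pairwise fun i j => ¬ Collide (p i) (p j)

/-- `(G, xI, xG)` together with the robot index type `R` forms an MPP
instance: the graph is connected and the start and goal configurations are
injective. -/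
def IsMPPInstance (G : SimpleGraph V) (xI xG : R → V) : Prop :=
  G.Connected ∧ Function.Injective xI ∧ Function.Injective xG

variable [Fintype R]

/-- Total arrival time of a solution. -/
noncomputable def totalTime (xG : R → V) (p : R → ℕ → V) : ℕ :=
  ∑ i, arrivalTime (xG i) (p i)

/-- Makespan (last arrival time) of a solution. -/
noncomputable def makespan (xG : R → V) (p : R → ℕ → V) : ℕ :=
  Finset.univ.sup fun i => arrivalTime (xG i) (p i)

/-- Total distance traveled in a solution. -/
noncomputable def totalDist (p : R → ℕ → V) : ℕ := ∑ i, pathLen (p i)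

/-- Maximum single-robot distance of a solution. -/
noncomputable def maxDist (p : R → ℕ → V) : ℕ :=
  Finset.univ.sup fun i => pathLen (p i)

/-- Minimum total arrival time over all solutions. -/
noncomputable def minTotalTime (G : SimpleGraph V) (xI xG : R → V) : ℕ :=
  sInf {c | ∃ p, IsSolution G xI xG p ∧ totalTime xG p = c}

/-- Minimum makespan over all solutions. -/
noncomputable def minMakespan (G : SimpleGraph V) (xI xG : R → V) : ℕ :=
  sInf {c | ∃ p, IsSolution G xI xG p ∧ makespan xG p = c}

/-- Minimum total distance over all solutions. -/
noncomputable def minTotalDist (G : SimpleGraph V) (xI xG : R → V) : ℕ :=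
  sInf {c | ∃ p, IsSolution G xI xG p ∧ totalDist p = c}

/-- Minimum maximum distance over all solutions. -/
noncomputable def minMaxDist (G : SimpleGraph V) (xI xG : R → V) : ℕ :=
  sInf {c | ∃ p, IsSolution G xI xG p ∧ maxDist p = c}

end MPPFormal

namespace MPPFormal

private def rel (m : ℕ) : ℕ → ℕ → Prop := fun u v =>
  (∃ i, u = 2*i ∧ v = 2*i+2) ∨
  (u = 2*m ∧ v = 1) ∨ (u = 1 ∧ v = 3) ∨ (u = 3 ∧ v = 2*m+4) ∨
  (u = 5 ∧ v = 2*m+2) ∨ (7 ≤ u ∧ u % 2 = 1 ∧ v = 0)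

private def gph (m : ℕ) : SimpleGraph ℕ := SimpleGraph.fromRel (rel m)

private def phi (m n : ℕ) : ℕ :=
  if n % 2 = 0 then n / 2
  else if n = 1 then m+1 else if n = 3 then m+2 else if n = 5 then m+2 else 1

private lemma phi_even (m i : ℕ) : phi m (2*i) = i := by
  simp only [phi, Nat.mul_mod_right, if_pos]
  omega

private lemma phi_one (m : ℕ) : phi m 1 = m+1 := by simp [phi]
private lemma phi_three (m : ℕ) : phi m 3 = m+2 := by simp [phi]
private lemma phi_five (m : ℕ) : phi m 5 = m+2 := by simp [phi]
private lemma phi_big (m u : ℕ) (h7 : 7 ≤ u) (ho : u % 2 = 1) : phi m u = 1 := by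
  unfold phi
  rw [if_neg (by omega), if_neg (by omega), if_neg (by omega), if_neg (by omega)]

private lemma rel_phi {m u v : ℕ} (h : rel m u v) :
    phi m v ≤ phi m u + 1 ∧ phi m u ≤ phi m v + 1 := by
  rcases h with ⟨i, hu, hv⟩ | ⟨hu, hv⟩ | ⟨hu, hv⟩ | ⟨hu, hv⟩ | ⟨hu, hv⟩ | ⟨h7, ho, hv⟩
  · subst hu; subst hv
    rw [show 2*i+2 = 2*(i+1) by ring, phi_even, phi_even]; omega
  · subst hu; subst hv; rw [phi_even, phi_one]; omega
  · subst hu; subst hv; rw [phi_one, phi_three]; omega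
  · subst hu; subst hv; rw [phi_three, show 2*m+4 = 2*(m+2) by ring, phi_even]; omega
  · subst hu; subst hv; rw [phi_five, show 2*m+2 = 2*(m+1) by ring, phi_even]; omega
  · subst hv; rw [phi_big m u h7 ho, show (0:ℕ) = 2*0 by ring, phi_even]; omega

private lemma adj_phi {m u v : ℕ} (h : (gph m).Adj u v) :
    phi m v ≤ phi m u + 1 := by
  rw [gph, SimpleGraph.fromRel_adj] at h
  rcases h.2 with h | h
  · exact (rel_phi h).1
  · exact (rel_phi h).2

private lemma phi_upper {m : ℕ} {p : ℕ → ℕ} (h0 : p 0 = 0)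
    (hadj : ∀ t, (gph m).Adj (p t) (p (t+1)) ∨ p t = p (t+1)) :
    ∀ t, phi m (p t) ≤ t := by
  intro t
  induction t with
  | zero =>
      rw [h0, show (0:ℕ) = 2*0 by ring, phi_even]
  | succ n ih =>
      rcases hadj n with h | h
      · have := adj_phi h; omega
      · rw [← h]; omega

private lemma robot0 {m : ℕ} {p : ℕ → ℕ}
    (hf : FeasiblePath (gph m) 0 (2*m+4) p)
    (hms : arrivalTime (2*m+4) p ≤ m+2) :
    arrivalTime (2*m+4) p = m+2 ∧ p (m+1) = 2*m+2 := by
  obtain ⟨h0, hex, hstay, hadj⟩ := hf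
  have hne : {t | p t = 2*m+4}.Nonempty := hex
  have hmem : p (arrivalTime (2*m+4) p) = 2*m+4 := Nat.sInf_mem hne
  have hup : ∀ t, phi m (p t) ≤ t := phi_upper h0 hadj
  have h1 : m+2 ≤ arrivalTime (2*m+4) p := by
    have h := hup (arrivalTime (2*m+4) p)
    rw [hmem, show 2*m+4 = 2*(m+2) by ring, phi_even] at h
    exact h
  have hT : arrivalTime (2*m+4) p = m+2 := le_antisymm hms h1
  have hp2 : p (m+2) = 2*m+4 := by rw [← hT]; exact hmem
  have hlow : phi m (p (m+2)) ≤ phi m (p (m+1)) + 1 := by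
    rcases hadj (m+1) with h | h
    · exact adj_phi h
    · rw [← h]; omega
  have hphi1 : phi m (p (m+1)) = m+1 := by
    have hu := hup (m+1)
    rw [hp2, show 2*m+4 = 2*(m+2) by ring, phi_even] at hlow
    omega
  refine ⟨hT, ?_⟩
  rcases hadj (m+1) with h | h
  · rw [hp2] at h
    rw [gph, SimpleGraph.fromRel_adj] at h
    rcases h.2 with (⟨i,hu,hv⟩|⟨hu,hv⟩|⟨hu,hv⟩|⟨hu,hv⟩|⟨hu,hv⟩|⟨h7,ho,hv⟩) |
      (⟨i,hu,hv⟩|⟨hu,hv⟩|⟨hu,hv⟩|⟨hu,hv⟩|⟨hu,hv⟩|⟨h7,ho,hv⟩)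
    · omega
    · omega
    · omega
    · rw [hu, phi_three] at hphi1; omega
    · omega
    · omega
    · rw [hv, show 2*i+2 = 2*(i+1) by ring, phi_even] at hphi1; omega
    · omega
    · omega
    · omega
    · omega
    · omega
  · rw [h, hp2, show 2*m+4 = 2*(m+2) by ring, phi_even] at hphi1; omega

private lemma reach (m : ℕ) : ∀ n, (gph m).Reachable n 0 := by
  have heven : ∀ i, (gph m).Reachable (2*i) 0 := by
    intro i
    induction i with
    | zero => exact SimpleGraph.Reachable.refl _
    | succ n ih =>
        have hadj : (gph m).Adj (2*n) (2*(n+1)) := by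
          rw [gph, SimpleGraph.fromRel_adj]
          exact ⟨by omega, Or.inl (Or.inl ⟨n, rfl, by ring⟩)⟩
        exact (hadj.symm.reachable).trans ih
  have r1 : (gph m).Reachable 1 0 := by
    have hadj : (gph m).Adj (2*m) 1 := by
      rw [gph, SimpleGraph.fromRel_adj]
      exact ⟨by omega, Or.inl (Or.inr (Or.inl ⟨rfl, rfl⟩))⟩
    exact hadj.symm.reachable.trans (heven m)
  intro n
  rcases Nat.even_or_odd n with ⟨i, hi⟩ | ho
  · have := heven i; rwa [show 2*i = n by omega] at this
  · have ho1 : n % 2 = 1 := Nat.odd_iff.mp ho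
    by_cases h1 : n = 1
    · subst h1; exact r1
    by_cases h3 : n = 3
    · subst h3
      have hadj : (gph m).Adj 1 3 := by
        rw [gph, SimpleGraph.fromRel_adj]
        exact ⟨by omega, Or.inl (Or.inr (Or.inr (Or.inl ⟨rfl, rfl⟩)))⟩
      exact hadj.symm.reachable.trans r1
    by_cases h5 : n = 5
    · subst h5
      have hadj : (gph m).Adj 5 (2*(m+1)) := by
        rw [gph, SimpleGraph.fromRel_adj]
        exact ⟨by omega, Or.inl (Or.inr (Or.inr (Or.inr (Or.inr (Or.inl ⟨rfl, by ring⟩)))))⟩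
      exact hadj.reachable.trans (heven (m+1))
    · have hadj : (gph m).Adj n 0 := by
        rw [gph, SimpleGraph.fromRel_adj]
        exact ⟨by omega, Or.inl (Or.inr (Or.inr (Or.inr (Or.inr (Or.inr ⟨by omega, ho1, rfl⟩)))))⟩
      exact hadj.reachable

private lemma gph_connected (m : ℕ) : (gph m).Connected := by
  rw [SimpleGraph.connected_iff]
  exact ⟨fun u v => (reach m u).trans (reach m v).symm, ⟨0⟩⟩



private lemma arrival_eq {g : ℕ} {p : ℕ → ℕ} {a : ℕ} (ha : p a = g)
    (hlt : ∀ t, t < a → p t ≠ g) : arrivalTime g p = a := by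
  have hne : {t | p t = g}.Nonempty := ⟨a, ha⟩
  have hmem : p (sInf {t | p t = g}) = g := Nat.sInf_mem hne
  have h1 : sInf {t | p t = g} ≤ a := Nat.sInf_le ha
  have h2 : ¬ sInf {t | p t = g} < a := fun h => hlt _ h hmem
  unfold arrivalTime
  omega

private def pA0 (m t : ℕ) : ℕ :=
  if t ≤ m then 2*t else if t = m+1 then 1 else if t = m+2 then 3 else 2*m+4
private def pA1 (m t : ℕ) : ℕ := if t = 0 then 5 else 2*m+2
private def pB0 (m t : ℕ) : ℕ := 2 * min t (m+2)
private def pB1 (m t : ℕ) : ℕ := if t ≤ m+1 then 5 else 2*m+2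

private lemma arr_pA0 (m : ℕ) : arrivalTime (2*m+4) (pA0 m) = m+3 := by
  apply arrival_eq
  · unfold pA0; split_ifs <;> omega
  · intro t ht; unfold pA0; split_ifs <;> omega

private lemma arr_pA1 (m : ℕ) : arrivalTime (2*m+2) (pA1 m) = 1 := by
  apply arrival_eq
  · simp [pA1]
  · intro t ht; unfold pA1; split_ifs <;> omega

private lemma arr_pB0 (m : ℕ) : arrivalTime (2*m+4) (pB0 m) = m+2 := by
  apply arrival_eq
  · unfold pB0; omega
  · intro t ht; unfold pB0; omega

private lemma arr_pB1 (m : ℕ) : arrivalTime (2*m+2) (pB1 m) = m+2 := by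
  apply arrival_eq
  · unfold pB1; split_ifs <;> omega
  · intro t ht; unfold pB1; split_ifs <;> omega

private lemma adj_ray (m t : ℕ) : (gph m).Adj (2*t) (2*t+2) := by
  rw [gph, SimpleGraph.fromRel_adj]
  exact ⟨by omega, Or.inl (Or.inl ⟨t, rfl, rfl⟩)⟩

private lemma feas_pA0 (m : ℕ) : FeasiblePath (gph m) 0 (2*m+4) (pA0 m) := by
  refine ⟨by unfold pA0; simp, ⟨m+3, by unfold pA0; split_ifs <;> omega⟩, ?_, ?_⟩
  · intro t ht
    rw [arr_pA0] at ht
    unfold pA0; split_ifs <;> omega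
  · intro t
    rcases Nat.lt_or_ge t m with h | h
    · left
      rw [show pA0 m t = 2*t by unfold pA0; split_ifs <;> omega,
          show pA0 m (t+1) = 2*t+2 by unfold pA0; split_ifs <;> omega]
      exact adj_ray m t
    rcases Nat.lt_or_ge t (m+1) with h2 | h2
    · left
      rw [show pA0 m t = 2*m by unfold pA0; split_ifs <;> omega,
          show pA0 m (t+1) = 1 by unfold pA0; split_ifs <;> omega,
          gph, SimpleGraph.fromRel_adj]
      exact ⟨by omega, Or.inl (Or.inr (Or.inl ⟨rfl, rfl⟩))⟩
    rcases Nat.lt_or_ge t (m+2) with h3 | h3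
    · left
      rw [show pA0 m t = 1 by unfold pA0; split_ifs <;> omega,
          show pA0 m (t+1) = 3 by unfold pA0; split_ifs <;> omega,
          gph, SimpleGraph.fromRel_adj]
      exact ⟨by omega, Or.inl (Or.inr (Or.inr (Or.inl ⟨rfl, rfl⟩)))⟩
    rcases Nat.lt_or_ge t (m+3) with h4 | h4
    · left
      rw [show pA0 m t = 3 by unfold pA0; split_ifs <;> omega,
          show pA0 m (t+1) = 2*m+4 by unfold pA0; split_ifs <;> omega,
          gph, SimpleGraph.fromRel_adj]
      exact ⟨by omega, Or.inl (Or.inr (Or.inr (Or.inr (Or.inl ⟨rfl, rfl⟩))))⟩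
    · right; unfold pA0; split_ifs <;> omega

private lemma feas_pA1 (m : ℕ) : FeasiblePath (gph m) 5 (2*m+2) (pA1 m) := by
  refine ⟨by unfold pA1; simp, ⟨1, by simp [pA1]⟩, ?_, ?_⟩
  · intro t ht
    rw [arr_pA1] at ht
    unfold pA1; rw [if_neg (by omega)]
  · intro t
    rcases eq_or_ne t 0 with h | h
    · left
      rw [show pA1 m t = 5 by unfold pA1; rw [if_pos h],
          show pA1 m (t+1) = 2*m+2 by unfold pA1; rw [if_neg (by omega)],
          gph, SimpleGraph.fromRel_adj]
      exact ⟨by omega, Or.inl (Or.inr (Or.inr (Or.inr (Or.inr (Or.inl ⟨rfl, rfl⟩)))))⟩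
    · right; unfold pA1; rw [if_neg h, if_neg (by omega)]

private lemma feas_pB0 (m : ℕ) : FeasiblePath (gph m) 0 (2*m+4) (pB0 m) := by
  refine ⟨by unfold pB0; simp, ⟨m+2, by unfold pB0; omega⟩, ?_, ?_⟩
  · intro t ht
    rw [arr_pB0] at ht
    unfold pB0; omega
  · intro t
    rcases Nat.lt_or_ge t (m+2) with h | h
    · left
      rw [show pB0 m t = 2*t by unfold pB0; omega,
          show pB0 m (t+1) = 2*t+2 by unfold pB0; omega]
      exact adj_ray m t
    · right; unfold pB0; omega

private lemma feas_pB1 (m : ℕ) : FeasiblePath (gph m) 5 (2*m+2) (pB1 m) := by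
  refine ⟨by unfold pB1; simp, ⟨m+2, by unfold pB1; split_ifs <;> omega⟩, ?_, ?_⟩
  · intro t ht
    rw [arr_pB1] at ht
    unfold pB1; split_ifs <;> omega
  · intro t
    rcases Nat.lt_or_ge t (m+1) with h | h
    · right; unfold pB1; split_ifs <;> omega
    rcases Nat.lt_or_ge t (m+2) with h2 | h2
    · left
      rw [show pB1 m t = 5 by unfold pB1; split_ifs <;> omega,
          show pB1 m (t+1) = 2*m+2 by unfold pB1; split_ifs <;> omega,
          gph, SimpleGraph.fromRel_adj]
      exact ⟨by omega, Or.inl (Or.inr (Or.inr (Or.inr (Or.inr (Or.inl ⟨rfl, rfl⟩)))))⟩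
    · right; unfold pB1; split_ifs <;> omega

private lemma A_disj (m : ℕ) : ∀ t t', pA0 m t ≠ pA1 m t' := by
  intro t t'; unfold pA0 pA1; split_ifs <;> omega

private lemma A_nocol (m : ℕ) : ¬ Collide (pA0 m) (pA1 m) := by
  rintro (⟨t, ht⟩ | ⟨t, h1, h2, h3⟩)
  · exact A_disj m t t ht
  · exact A_disj m t (t+1) h1

private lemma A_nocol' (m : ℕ) : ¬ Collide (pA1 m) (pA0 m) := by
  rintro (⟨t, ht⟩ | ⟨t, h1, h2, h3⟩)
  · exact A_disj m t t ht.symm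
  · exact A_disj m (t+1) t h1.symm

private lemma B_nocol (m : ℕ) : ¬ Collide (pB0 m) (pB1 m) := by
  rintro (⟨t, ht⟩ | ⟨t, h1, h2, h3⟩)
  · unfold pB0 pB1 at ht; split_ifs at ht <;> omega
  · unfold pB0 pB1 at h1 h2; split_ifs at h1 h2 <;> omega

private lemma B_nocol' (m : ℕ) : ¬ Collide (pB1 m) (pB0 m) := by
  rintro (⟨t, ht⟩ | ⟨t, h1, h2, h3⟩)
  · unfold pB0 pB1 at ht; split_ifs at ht <;> omega
  · unfold pB0 pB1 at h1 h2; split_ifs at h1 h2 <;> omega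

private lemma solA (m : ℕ) :
    IsSolution (gph m) ![0, 5] ![2*m+4, 2*m+2] ![pA0 m, pA1 m] := by
  constructor
  · intro i
    fin_cases i
    · simpa using feas_pA0 m
    · simpa using feas_pA1 m
  · intro i j hij
    fin_cases i <;> fin_cases j <;> simp_all
    · exact A_nocol m
    · exact A_nocol' m

private lemma solB (m : ℕ) :
    IsSolution (gph m) ![0, 5] ![2*m+4, 2*m+2] ![pB0 m, pB1 m] := by
  constructor
  · intro i
    fin_cases i
    · simpa using feas_pB0 m
    · simpa using feas_pB1 m
  · intro i j hij
    fin_cases i <;> fin_cases j <;> simp_all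
    · exact B_nocol m
    · exact B_nocol' m

private lemma totalA (m : ℕ) :
    totalTime (![2*m+4, 2*m+2] : Fin 2 → ℕ) ![pA0 m, pA1 m] = m+4 := by
  unfold totalTime
  rw [Fin.sum_univ_two]
  simp [arr_pA0, arr_pA1]

private lemma mkB (m : ℕ) :
    makespan (![2*m+4, 2*m+2] : Fin 2 → ℕ) ![pB0 m, pB1 m] = m+2 := by
  unfold makespan
  apply le_antisymm
  · apply Finset.sup_le
    intro i _
    fin_cases i
    · simp [arr_pB0]
    · simp [arr_pB1]
  · have := Finset.le_sup (f := fun i => arrivalTime ((![2*m+4, 2*m+2] : Fin 2 → ℕ) i)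
      ((![pB0 m, pB1 m] : Fin 2 → ℕ → ℕ) i)) (Finset.mem_univ 0)
    simpa [arr_pB0] using this

/-- For every positive integer `M` there exists a solvable MPP instance such
that every solution attaining the minimum makespan has total arrival time at
least `M` greater than the minimum total arrival time: the gap between the
two extreme points of the Pareto front for the pair
(total arrival time, makespan) can be made arbitrarily large. -/
theorem pareto_gap_totalTime_makespan :
    ∀ M : ℕ, 0 < M →
      ∃ (k : ℕ) (V : Type) (G : SimpleGraph V) (xI xG : Fin k → V),
        IsMPPInstance G xI xG ∧ (∃ p, IsSolution G xI xG p) ∧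
        ∀ p, IsSolution G xI xG p → makespan xG p = minMakespan G xI xG →
          minTotalTime G xI xG + M ≤ totalTime xG p := by
  intro M hM
  refine ⟨2, ℕ, gph M, ![0, 5], ![2*M+4, 2*M+2], ⟨gph_connected M, ?_, ?_⟩,
    ⟨_, solB M⟩, ?_⟩
  · intro a b hab
    fin_cases a <;> fin_cases b <;> simp_all
  · intro a b hab
    fin_cases a <;> fin_cases b <;> simp_all
  · intro p hsol hmk
    have hminmk : minMakespan (gph M) ![0, 5] ![2*M+4, 2*M+2] ≤ M+2 := by
      apply Nat.sInf_le
      exact ⟨_, solB M, mkB M⟩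
    have harr0le : arrivalTime ((![2*M+4, 2*M+2] : Fin 2 → ℕ) 0) (p 0) ≤ M+2 := by
      have h := Finset.le_sup (f := fun i =>
        arrivalTime ((![2*M+4, 2*M+2] : Fin 2 → ℕ) i) (p i)) (Finset.mem_univ 0)
      calc arrivalTime ((![2*M+4, 2*M+2] : Fin 2 → ℕ) 0) (p 0)
          ≤ makespan (![2*M+4, 2*M+2] : Fin 2 → ℕ) p := h
        _ = minMakespan (gph M) ![0, 5] ![2*M+4, 2*M+2] := hmk
        _ ≤ M+2 := hminmk
    have hf0 : FeasiblePath (gph M) 0 (2*M+4) (p 0) := by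
      have := hsol.1 0
      simpa using this
    have harr0le' : arrivalTime (2*M+4) (p 0) ≤ M+2 := by
      simpa using harr0le
    obtain ⟨harr0, hpos⟩ := robot0 hf0 harr0le'
    have hf1 : FeasiblePath (gph M) 5 (2*M+2) (p 1) := by
      have := hsol.1 1
      simpa using this
    have harr1 : M+2 ≤ arrivalTime (2*M+2) (p 1) := by
      by_contra hlt
      push_neg at hlt
      have hstay := hf1.2.2.1 (M+1) (by omega)
      have hnc : ¬ Collide (p 0) (p 1) := hsol.2 (by decide : (0 : Fin 2) ≠ 1)
      exact hnc (Or.inl ⟨M+1, by rw [hpos, hstay]⟩)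
    have hmintt : minTotalTime (gph M) ![0, 5] ![2*M+4, 2*M+2] ≤ M+4 := by
      apply Nat.sInf_le
      exact ⟨_, solA M, totalA M⟩
    have htot : totalTime (![2*M+4, 2*M+2] : Fin 2 → ℕ) p =
        arrivalTime (2*M+4) (p 0) + arrivalTime (2*M+2) (p 1) := by
      unfold totalTime
      rw [Fin.sum_univ_two]
      simp
    rw [htot, harr0]
    omega


end MPPFormal
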